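/- Let p > 3 be a prime and a an integer with a² < 4p. Suppose α ∈ ℚ_p satisfies α² − a·α + p = 0. Let G be any finite commutative group and σ ∈ G. Then the element 1 − α⁻¹·σ − α⁻¹·σ⁻¹ is a unit in the group algebra ℚ_p[G]. -/

import Mathlib

open Polynomial

/-- **Group-ring invertibility, part 2.**
Let `p > 3` be a prime, `a ∈ ℤ` with `a² < 4p`, and `α ∈ ℚ_p` a root of
`X² - aX + p`.  For any finite commutative group `G` and `σ ∈ G`, the element
`1 - α⁻¹·σ - α⁻¹·σ⁻¹` is a unit in the group algebra `ℚ_p[G]`. -/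
theorem one_sub_inv_root_smul_sub_isUnit (p : ℕ) [Fact p.Prime] (hp3 : 3 < p) (a : ℤ)
    (ha : a ^ 2 < 4 * (p : ℤ)) (α : ℚ_[p]) (hα : α ^ 2 - (a : ℚ_[p]) * α + p = 0)
    (G : Type*) [CommGroup G] [Fintype G] (σ : G) :
    IsUnit ((1 : MonoidAlgebra ℚ_[p] G) - MonoidAlgebra.single σ α⁻¹
      - MonoidAlgebra.single σ⁻¹ α⁻¹) := by
  classical
  have hpprime : p.Prime := Fact.out
  have hp0 : (p : ℚ_[p]) ≠ 0 := Nat.cast_ne_zero.mpr hpprime.ne_zero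
  have hα0 : α ≠ 0 := by
    intro h
    rw [h] at hα
    norm_num at hα
    exact hpprime.ne_zero hα
  set n := orderOf σ with hn
  have hn0 : 0 < n := orderOf_pos σ
  -- the auxiliary integer polynomial over ℚ
  set g : ℚ[X] := X ^ 4 - C (a : ℚ) * X ^ 3 + C ((p : ℚ) + 2) * X ^ 2 - C (a : ℚ) * X + 1
    with hg
  -- coprimality over ℚ, via complex roots
  have hcop : IsCoprime g (X ^ n - 1 : ℚ[X]) := by
    rw [Polynomial.isCoprime_iff_aeval_ne_zero_of_isAlgClosed ℚ ℂ]
    intro z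
    by_contra hcon
    push_neg at hcon
    obtain ⟨h1, h2⟩ := hcon
    have hzn : z ^ n = 1 := by
      have h2' : z ^ n - 1 = 0 := by simpa using h2
      rwa [sub_eq_zero] at h2'
    have hz0 : z ≠ 0 := by
      intro h
      rw [h, zero_pow hn0.ne'] at hzn
      exact zero_ne_one hzn
    have habs : ‖z‖ = 1 := Complex.norm_eq_one_of_pow_eq_one hzn hn0.ne'
    set w : ℂ := (starRingEnd ℂ) z with hwdef
    have hm : z * w = 1 := by
      rw [hwdef, Complex.mul_conj, Complex.normSq_eq_norm_sq, habs]
      norm_num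
    set r : ℝ := z.re with hr
    have hw : z + w = 2 * (r : ℂ) := by
      rw [hwdef, Complex.add_conj, hr]
      norm_num
    have heval : z ^ 4 - (a : ℂ) * z ^ 3 + ((p : ℂ) + 2) * z ^ 2 - (a : ℂ) * z + 1 = 0 := by
      have := h1
      simp only [hg, map_add, map_sub, map_mul, map_pow, map_one, aeval_X, aeval_C] at this
      push_cast at this
      simp only [map_intCast, map_ofNat] at this
      convert this using 2 <;> push_cast <;> ring
    have key : ((4 : ℂ) * r ^ 2 - 2 * (a : ℂ) * r + (p : ℂ)) * z ^ 2 = 0 := by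
      linear_combination heval + (2 * z ^ 2 + z * w + 1 - (a : ℂ) * z) * hm
        + ((a : ℂ) * z ^ 2 - (z + w + 2 * (r : ℂ)) * z ^ 2) * hw
    have hCeq : (4 : ℂ) * r ^ 2 - 2 * (a : ℂ) * r + (p : ℂ) = 0 := by
      rcases mul_eq_zero.mp key with h | h
      · exact h
      · exact absurd h (pow_ne_zero 2 hz0)
    have hReq : (4 : ℝ) * r ^ 2 - 2 * (a : ℝ) * r + (p : ℝ) = 0 := by
      exact_mod_cast hCeq
    have haR : (a : ℝ) ^ 2 < 4 * (p : ℝ) := by exact_mod_cast ha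
    nlinarith [sq_nonneg (4 * r - (a : ℝ))]
  -- transfer to ℚ_p
  have hcop' : IsCoprime (g.map (algebraMap ℚ ℚ_[p])) ((X ^ n - 1 : ℚ[X]).map (algebraMap ℚ ℚ_[p])) :=
    hcop.map (Polynomial.mapRingHom (algebraMap ℚ ℚ_[p]))
  -- evaluate at t = single σ 1
  set A := MonoidAlgebra ℚ_[p] G
  set t : A := MonoidAlgebra.of ℚ_[p] G σ with ht
  set s : A := MonoidAlgebra.of ℚ_[p] G σ⁻¹ with hs
  have hts : t * s = 1 := by
    rw [ht, hs, ← map_mul, mul_inv_cancel, map_one]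
  have htn : t ^ n = 1 := by
    rw [ht, ← map_pow, pow_orderOf_eq_one, map_one]
  set c : ℚ_[p] →+* A := algebraMap ℚ_[p] A with hc
  obtain ⟨u, v, huv⟩ := hcop'
  have hev := congrArg (Polynomial.aeval t) huv
  simp only [map_add, map_mul, map_one] at hev
  have hXn : Polynomial.aeval t ((X ^ n - 1 : ℚ[X]).map (algebraMap ℚ ℚ_[p])) = 0 := by
    simp [Polynomial.map_sub, Polynomial.map_pow, Polynomial.map_one, htn]
  rw [hXn, mul_zero, add_zero] at hev
  have hgev : Polynomial.aeval t (g.map (algebraMap ℚ ℚ_[p]))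
      = t ^ 4 - (a : A) * t ^ 3 + ((p : A) + 2) * t ^ 2 - (a : A) * t + 1 := by
    simp only [hg, Polynomial.map_add, Polynomial.map_sub, Polynomial.map_mul,
      Polynomial.map_pow, Polynomial.map_one, Polynomial.map_X, Polynomial.map_C,
      map_add, map_sub, map_mul, map_pow, map_one, map_intCast, map_natCast,
      map_ofNat, aeval_X, aeval_C]
    push_cast
    simp only [Polynomial.map_intCast, Polynomial.map_natCast, Polynomial.map_ofNat,
      map_intCast, map_natCast, map_ofNat]
  have hunit_g : IsUnit (Polynomial.aeval t (g.map (algebraMap ℚ ℚ_[p]))) := by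
    have h1 : IsUnit ((Polynomial.aeval t) u * (Polynomial.aeval t) (g.map (algebraMap ℚ ℚ_[p]))) := by
      rw [hev]; exact isUnit_one
    exact isUnit_of_mul_isUnit_right h1
  -- factor g(t) = f(t) * f~(t)
  have hfac : t ^ 4 - (a : A) * t ^ 3 + ((p : A) + 2) * t ^ 2 - (a : A) * t + 1
      = (t ^ 2 - c α * t + 1) * (t ^ 2 - c ((a : ℚ_[p]) - α) * t + 1) := by
    have h2 : c α * c ((a : ℚ_[p]) - α) = (p : A) := by
      rw [← map_mul, ← map_natCast c (p : ℕ)]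
      congr 1
      linear_combination -hα
    have h3 : c α + c ((a : ℚ_[p]) - α) = (a : A) := by
      rw [← map_add, ← map_intCast c a]
      congr 1
      ring
    linear_combination (-(t ^ 2)) * h2 + (t ^ 3 + t) * h3
  have hfun : IsUnit (t ^ 2 - c α * t + 1) := by
    have := hunit_g
    rw [hgev, hfac] at this
    exact isUnit_of_mul_isUnit_left this
  -- relate to the target element
  have hsingle1 : MonoidAlgebra.single σ α⁻¹ = c α⁻¹ * t := by
    rw [ht, hc, MonoidAlgebra.single_eq_algebraMap_mul_of]
  have hsingle2 : MonoidAlgebra.single σ⁻¹ α⁻¹ = c α⁻¹ * s := by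
    rw [hs, hc, MonoidAlgebra.single_eq_algebraMap_mul_of]
  have hkey : (1 - MonoidAlgebra.single σ α⁻¹ - MonoidAlgebra.single σ⁻¹ α⁻¹ : A)
      * (-(c α * t)) = t ^ 2 - c α * t + 1 := by
    rw [hsingle1, hsingle2]
    have hcc : c α * c α⁻¹ = 1 := by
      rw [← map_mul, mul_inv_cancel₀ hα0, map_one]
    linear_combination (t ^ 2 + 1) * hcc + c α * c α⁻¹ * hts
  exact isUnit_of_mul_isUnit_left (hkey ▸ hfun)
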